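/- Let H be a bialgebra over a field k and A a left H-module algebra. Let F ∈ H ⊗ H be an invertible element satisfying the cocycle condition (F ⊗ 1)·((Δ ⊗ id)F) = (1 ⊗ F)·((id ⊗ Δ)F) in H ⊗ H ⊗ H. Writing F⁻¹ = Σᵢ f̄ᵢ ⊗ ḡᵢ, the twisted product a ⋆ b := Σᵢ (f̄ᵢ•a)(ḡᵢ•b) on A is associative: (a ⋆ b) ⋆ c = a ⋆ (b ⋆ c) for all a, b, c ∈ A. -/

import Mathlib

open TensorProduct

noncomputable section

variable {k H A : Type*} [Field k] [Ring H] [Bialgebra k H] [Ring A] [Algebra k A]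

/-- The lift of an action `H → End A` to a map `H ⊗ H → End (A ⊗ A)`,
sending `h ⊗ h'` to `(h • ·) ⊗ (h' • ·)`. -/
def act2 (act : H →ₐ[k] Module.End k A) :
    H ⊗[k] H →ₗ[k] (A ⊗[k] A →ₗ[k] A ⊗[k] A) :=
  TensorProduct.homTensorHomMap (RingHom.id k) A A A A ∘ₗ
    TensorProduct.map act.toLinearMap act.toLinearMap

/-- The twisted product `a ⋆ b = Σᵢ (f̄ᵢ • a)(ḡᵢ • b)` for `Finv = Σᵢ f̄ᵢ ⊗ ḡᵢ`. -/
def twistMul (act : H →ₐ[k] Module.End k A) (Finv : H ⊗[k] H) (x y : A) : A :=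
  LinearMap.mul' k A (act2 act Finv (x ⊗ₜ[k] y))

section Aux

variable (k A) in
/-- The action on `A ⊗ A` as an algebra hom. -/
def E2 (act : H →ₐ[k] Module.End k A) : H ⊗[k] H →ₐ[k] Module.End k (A ⊗[k] A) :=
  (Module.endTensorEndAlgHom (R := k) (S := k) (A := k) (M := A) (N := A)).comp
    (Algebra.TensorProduct.map act act)

variable (k A) in
def E3L (act : H →ₐ[k] Module.End k A) :
    (H ⊗[k] H) ⊗[k] H →ₐ[k] Module.End k ((A ⊗[k] A) ⊗[k] A) :=
  (Module.endTensorEndAlgHom (R := k) (S := k) (A := k)).comp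
    (Algebra.TensorProduct.map (E2 k A act) act)

variable (k A) in
def E3R (act : H →ₐ[k] Module.End k A) :
    H ⊗[k] (H ⊗[k] H) →ₐ[k] Module.End k (A ⊗[k] (A ⊗[k] A)) :=
  (Module.endTensorEndAlgHom (R := k) (S := k) (A := k)).comp
    (Algebra.TensorProduct.map act (E2 k A act))

variable (k A) in
def m3L : (A ⊗[k] A) ⊗[k] A →ₗ[k] A :=
  LinearMap.mul' k A ∘ₗ TensorProduct.map (LinearMap.mul' k A) LinearMap.id

variable (k A) in
def m3R : A ⊗[k] (A ⊗[k] A) →ₗ[k] A :=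
  LinearMap.mul' k A ∘ₗ TensorProduct.map LinearMap.id (LinearMap.mul' k A)

variable (k H) in
def DL : H ⊗[k] H →ₐ[k] (H ⊗[k] H) ⊗[k] H :=
  Algebra.TensorProduct.map (Bialgebra.comulAlgHom k H) (AlgHom.id k H)

variable (k H) in
def DR : H ⊗[k] H →ₐ[k] H ⊗[k] (H ⊗[k] H) :=
  Algebra.TensorProduct.map (AlgHom.id k H) (Bialgebra.comulAlgHom k H)

lemma act2_eq_E2 (act : H →ₐ[k] Module.End k A) (X : H ⊗[k] H) (v : A ⊗[k] A) :
    act2 act X v = E2 k A act X v := by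
  induction X using TensorProduct.induction_on with
  | zero => simp [act2, E2]
  | tmul h h' =>
      simp only [act2, E2, LinearMap.comp_apply, TensorProduct.map_tmul,
        TensorProduct.homTensorHomMap_apply, AlgHom.comp_apply,
        Algebra.TensorProduct.map_tmul, Module.endTensorEndAlgHom_apply]
      rfl
  | add x y hx hy =>
      simp only [map_add, LinearMap.add_apply, hx, hy]

lemma keyL (act : H →ₐ[k] Module.End k A)
    (hact_mul : ∀ (h : H) (a b : A),
      act h (a * b) = LinearMap.mul' k A (act2 act (Coalgebra.comul h) (a ⊗ₜ[k] b)))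
    (X : H ⊗[k] H) (w : (A ⊗[k] A) ⊗[k] A) :
    LinearMap.mul' k A
        (E2 k A act X (TensorProduct.map (LinearMap.mul' k A) LinearMap.id w)) =
      m3L k A (E3L k A act (DL k H X) w) := by
  induction X using TensorProduct.induction_on with
  | zero => simp
  | tmul h h' =>
      induction w using TensorProduct.induction_on with
      | zero => simp
      | tmul u c =>
          induction u using TensorProduct.induction_on with
          | zero => simp [TensorProduct.zero_tmul]
          | tmul x y =>
              simp only [E2, E3L, DL, m3L, AlgHom.comp_apply, LinearMap.comp_apply,
                TensorProduct.map_tmul, Algebra.TensorProduct.map_tmul,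
                Module.endTensorEndAlgHom_apply, TensorProduct.AlgebraTensorModule.map_tmul,
                LinearMap.id_apply, LinearMap.mul'_apply, AlgHom.coe_id, id_eq,
                Bialgebra.comulAlgHom_apply]
              rw [hact_mul h x y, act2_eq_E2 act]
              simp only [E2, AlgHom.comp_apply]
          | add u1 u2 h1 h2 =>
              simp only [TensorProduct.add_tmul, map_add, LinearMap.add_apply] at h1 h2 ⊢
              rw [h1, h2]
      | add w1 w2 h1 h2 =>
          simp only [map_add, LinearMap.add_apply] at h1 h2 ⊢
          rw [h1, h2]
  | add X1 X2 h1 h2 =>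
      simp only [map_add, LinearMap.add_apply, h1, h2]

lemma keyR (act : H →ₐ[k] Module.End k A)
    (hact_mul : ∀ (h : H) (a b : A),
      act h (a * b) = LinearMap.mul' k A (act2 act (Coalgebra.comul h) (a ⊗ₜ[k] b)))
    (X : H ⊗[k] H) (w : A ⊗[k] (A ⊗[k] A)) :
    LinearMap.mul' k A
        (E2 k A act X (TensorProduct.map LinearMap.id (LinearMap.mul' k A) w)) =
      m3R k A (E3R k A act (DR k H X) w) := by
  induction X using TensorProduct.induction_on with
  | zero => simp
  | tmul h h' =>
      induction w using TensorProduct.induction_on with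
      | zero => simp
      | tmul c u =>
          induction u using TensorProduct.induction_on with
          | zero => simp [TensorProduct.tmul_zero]
          | tmul x y =>
              simp only [E2, E3R, DR, m3R, AlgHom.comp_apply, LinearMap.comp_apply,
                TensorProduct.map_tmul, Algebra.TensorProduct.map_tmul,
                Module.endTensorEndAlgHom_apply, TensorProduct.AlgebraTensorModule.map_tmul,
                LinearMap.id_apply, LinearMap.mul'_apply, AlgHom.coe_id, id_eq,
                Bialgebra.comulAlgHom_apply]
              rw [hact_mul h' x y, act2_eq_E2 act]
              simp only [E2, AlgHom.comp_apply]
          | add u1 u2 h1 h2 =>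
              simp only [TensorProduct.tmul_add, map_add, LinearMap.add_apply] at h1 h2 ⊢
              rw [h1, h2]
      | add w1 w2 h1 h2 =>
          simp only [map_add, LinearMap.add_apply] at h1 h2 ⊢
          rw [h1, h2]
  | add X1 X2 h1 h2 =>
      simp only [map_add, LinearMap.add_apply, h1, h2]

lemma assoc_compat (act : H →ₐ[k] Module.End k A) (Z : H ⊗[k] (H ⊗[k] H)) (a b c : A) :
    m3L k A (E3L k A act ((Algebra.TensorProduct.assoc k k k H H H).symm Z)
        ((a ⊗ₜ[k] b) ⊗ₜ[k] c)) =
      m3R k A (E3R k A act Z (a ⊗ₜ[k] (b ⊗ₜ[k] c))) := by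
  induction Z using TensorProduct.induction_on with
  | zero => simp
  | tmul h w =>
      induction w using TensorProduct.induction_on with
      | zero => simp [TensorProduct.tmul_zero]
      | tmul h' h'' =>
          simp only [Algebra.TensorProduct.assoc_symm_tmul, E3L, E3R, E2, m3L, m3R,
            AlgHom.comp_apply, LinearMap.comp_apply, Algebra.TensorProduct.map_tmul,
            Module.endTensorEndAlgHom_apply, TensorProduct.AlgebraTensorModule.map_tmul,
            TensorProduct.map_tmul, LinearMap.id_apply, LinearMap.mul'_apply]
          exact mul_assoc _ _ _
      | add w1 w2 h1 h2 =>
          simp only [TensorProduct.tmul_add, map_add, LinearMap.add_apply] at h1 h2 ⊢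
          rw [h1, h2]
  | add Z1 Z2 h1 h2 =>
      simp only [map_add, LinearMap.add_apply, h1, h2]

end Aux

set_option maxHeartbeats 1000000 in
/-- if `F` is an invertible twist satisfying the cocycle condition, then the
twisted product on a left `H`-module algebra `A` is associative. -/
theorem twistMul_assoc (act : H →ₐ[k] Module.End k A)
    (hact_mul : ∀ (h : H) (a b : A),
      act h (a * b) = LinearMap.mul' k A (act2 act (Coalgebra.comul h) (a ⊗ₜ[k] b)))
    (hact_one : ∀ h : H, act h (1 : A) = Coalgebra.counit (R := k) h • (1 : A))
    (F Finv : H ⊗[k] H) (hF : F * Finv = 1) (hF' : Finv * F = 1)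
    (hcocycle :
      ((F ⊗ₜ[k] (1 : H)) * TensorProduct.map Coalgebra.comul LinearMap.id F) =
        (Algebra.TensorProduct.assoc k k k H H H).symm
          (((1 : H) ⊗ₜ[k] F) * TensorProduct.map LinearMap.id Coalgebra.comul F))
    (a b c : A) :
    twistMul act Finv (twistMul act Finv a b) c =
      twistMul act Finv a (twistMul act Finv b c) := by
  set σ := (Algebra.TensorProduct.assoc k k k H H H).symm with hσ
  -- rewrite hypotheses in terms of the algebra homs `DL`, `DR`
  have hmapDL : ∀ X : H ⊗[k] H,
      TensorProduct.map Coalgebra.comul LinearMap.id X = DL k H X := by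
    intro X
    induction X using TensorProduct.induction_on with
    | zero => simp
    | tmul h h' => simp [DL]
    | add x y hx hy => simp [hx, hy]
  have hmapDR : ∀ X : H ⊗[k] H,
      TensorProduct.map LinearMap.id Coalgebra.comul X = DR k H X := by
    intro X
    induction X using TensorProduct.induction_on with
    | zero => simp
    | tmul h h' => simp [DR]
    | add x y hx hy => simp [hx, hy]
  rw [hmapDL, hmapDR] at hcocycle
  -- the derived cocycle identity for the inverse twist
  have key : DL k H Finv * (Finv ⊗ₜ[k] (1 : H)) =
      σ (DR k H Finv * ((1 : H) ⊗ₜ[k] Finv)) := by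
    have h1 : (DL k H Finv * (Finv ⊗ₜ[k] (1 : H))) *
        ((F ⊗ₜ[k] (1 : H)) * DL k H F) = 1 := by
      have hmid : (Finv ⊗ₜ[k] (1 : H)) * (F ⊗ₜ[k] (1 : H)) = 1 := by
        rw [Algebra.TensorProduct.tmul_mul_tmul, hF', one_mul]
        exact Algebra.TensorProduct.one_def.symm
      calc DL k H Finv * (Finv ⊗ₜ[k] (1 : H)) * ((F ⊗ₜ[k] (1 : H)) * DL k H F)
          = DL k H Finv * ((Finv ⊗ₜ[k] (1 : H)) * (F ⊗ₜ[k] (1 : H))) * DL k H F := by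
            rw [mul_assoc, mul_assoc, mul_assoc]
        _ = DL k H Finv * DL k H F := by rw [hmid, mul_one]
        _ = 1 := by rw [← map_mul, hF', map_one]
    have h3 : ((F ⊗ₜ[k] (1 : H)) * DL k H F) *
        σ (DR k H Finv * ((1 : H) ⊗ₜ[k] Finv)) = 1 := by
      rw [hcocycle, ← map_mul]
      have : ((1 : H) ⊗ₜ[k] F) * DR k H F * (DR k H Finv * ((1 : H) ⊗ₜ[k] Finv)) = 1 := by
        calc ((1 : H) ⊗ₜ[k] F) * DR k H F * (DR k H Finv * ((1 : H) ⊗ₜ[k] Finv))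
            = ((1 : H) ⊗ₜ[k] F) * (DR k H F * DR k H Finv) * ((1 : H) ⊗ₜ[k] Finv) := by
              rw [mul_assoc, mul_assoc, mul_assoc]
          _ = ((1 : H) ⊗ₜ[k] F) * ((1 : H) ⊗ₜ[k] Finv) := by
              rw [← map_mul, hF, map_one, mul_one]
          _ = 1 := by
              rw [Algebra.TensorProduct.tmul_mul_tmul, hF, one_mul]
              exact Algebra.TensorProduct.one_def.symm
      rw [this, map_one]
    exact left_inv_eq_right_inv h1 h3
  -- now compute both sides
  have hL : twistMul act Finv (twistMul act Finv a b) c =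
      m3L k A (E3L k A act (DL k H Finv * (Finv ⊗ₜ[k] (1 : H))) ((a ⊗ₜ[k] b) ⊗ₜ[k] c)) := by
    have h0 : E3L k A act (Finv ⊗ₜ[k] (1 : H)) ((a ⊗ₜ[k] b) ⊗ₜ[k] c) =
        (E2 k A act Finv (a ⊗ₜ[k] b)) ⊗ₜ[k] c := by
      simp only [E3L, AlgHom.comp_apply, Algebra.TensorProduct.map_tmul, map_one,
        Module.endTensorEndAlgHom_apply, TensorProduct.AlgebraTensorModule.map_tmul,
        Module.End.one_apply]
    calc twistMul act Finv (twistMul act Finv a b) c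
        = LinearMap.mul' k A (E2 k A act Finv
            ((LinearMap.mul' k A (E2 k A act Finv (a ⊗ₜ[k] b))) ⊗ₜ[k] c)) := by
          simp only [twistMul, act2_eq_E2]
      _ = LinearMap.mul' k A (E2 k A act Finv
            (TensorProduct.map (LinearMap.mul' k A) LinearMap.id
              ((E2 k A act Finv (a ⊗ₜ[k] b)) ⊗ₜ[k] c))) := by
          simp only [TensorProduct.map_tmul, LinearMap.id_apply]
      _ = m3L k A (E3L k A act (DL k H Finv)
            ((E2 k A act Finv (a ⊗ₜ[k] b)) ⊗ₜ[k] c)) := keyL act hact_mul _ _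
      _ = m3L k A (E3L k A act (DL k H Finv)
            (E3L k A act (Finv ⊗ₜ[k] (1 : H)) ((a ⊗ₜ[k] b) ⊗ₜ[k] c))) := by rw [h0]
      _ = m3L k A (E3L k A act (DL k H Finv * (Finv ⊗ₜ[k] (1 : H)))
            ((a ⊗ₜ[k] b) ⊗ₜ[k] c)) := by
          rw [map_mul, Module.End.mul_apply]
  have hR : twistMul act Finv a (twistMul act Finv b c) =
      m3R k A (E3R k A act (DR k H Finv * ((1 : H) ⊗ₜ[k] Finv)) (a ⊗ₜ[k] (b ⊗ₜ[k] c))) := by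
    have h0 : E3R k A act ((1 : H) ⊗ₜ[k] Finv) (a ⊗ₜ[k] (b ⊗ₜ[k] c)) =
        a ⊗ₜ[k] (E2 k A act Finv (b ⊗ₜ[k] c)) := by
      simp only [E3R, AlgHom.comp_apply, Algebra.TensorProduct.map_tmul, map_one,
        Module.endTensorEndAlgHom_apply, TensorProduct.AlgebraTensorModule.map_tmul,
        Module.End.one_apply]
    calc twistMul act Finv a (twistMul act Finv b c)
        = LinearMap.mul' k A (E2 k A act Finv
            (a ⊗ₜ[k] (LinearMap.mul' k A (E2 k A act Finv (b ⊗ₜ[k] c))))) := by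
          simp only [twistMul, act2_eq_E2]
      _ = LinearMap.mul' k A (E2 k A act Finv
            (TensorProduct.map LinearMap.id (LinearMap.mul' k A)
              (a ⊗ₜ[k] (E2 k A act Finv (b ⊗ₜ[k] c))))) := by
          simp only [TensorProduct.map_tmul, LinearMap.id_apply]
      _ = m3R k A (E3R k A act (DR k H Finv)
            (a ⊗ₜ[k] (E2 k A act Finv (b ⊗ₜ[k] c)))) := keyR act hact_mul _ _
      _ = m3R k A (E3R k A act (DR k H Finv)
            (E3R k A act ((1 : H) ⊗ₜ[k] Finv) (a ⊗ₜ[k] (b ⊗ₜ[k] c)))) := by rw [h0]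
      _ = m3R k A (E3R k A act (DR k H Finv * ((1 : H) ⊗ₜ[k] Finv))
            (a ⊗ₜ[k] (b ⊗ₜ[k] c))) := by
          rw [map_mul, Module.End.mul_apply]
  rw [hL, hR, key, assoc_compat]

end
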